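/- Let F = ⟨f_1,…,f_r⟩ be a flip sequence realizing a shortest path from T_init to T_final, and let f_{s_1},…,f_{s_l} be the source nodes (nodes with no incoming arcs) of the DAG D_F. Then the underlying diagonals f_{s_1}^←,…,f_{s_l}^← are pairwise independent diagonals of T_init. -/

import Mathlib

open Finset

/-- Two vertices of the convex `m`-gon are adjacent in the cyclic order. -/
def PolyAdj (m : ℕ) (a b : Fin m) : Prop :=
  (a.val + 1) % m = b.val ∨ (b.val + 1) % m = a.val

/-- `e` is a diagonal of the convex `m`-gon: an unordered pair of distinct,
non-adjacent vertices. -/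
def IsDiagonal (m : ℕ) (e : Finset (Fin m)) : Prop :=
  ∃ a b : Fin m, a ≠ b ∧ ¬ PolyAdj m a b ∧ e = {a, b}

/-- The cyclic distance from `a` to `x`, going forwards in the cyclic order. -/
def cycDist (m : ℕ) (a x : Fin m) : ℕ := (x.val + m - a.val) % m

/-- `x` lies strictly between `a` and `b` in the cyclic order. -/
def CycBtw (m : ℕ) (a x b : Fin m) : Prop :=
  0 < cycDist m a x ∧ cycDist m a x < cycDist m a b

/-- Two chords cross: their endpoints strictly interleave in the cyclic order. -/
def Cross (m : ℕ) (e₁ e₂ : Finset (Fin m)) : Prop :=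
  ∃ a b c d : Fin m, e₁ = {a, b} ∧ e₂ = {c, d} ∧ CycBtw m a c b ∧ CycBtw m b d a

/-- A triangulation of the convex `m`-gon: a maximal set of pairwise
non-crossing diagonals. -/
structure Triangulation (m : ℕ) where
  diagonals : Finset (Finset (Fin m))
  isDiagonal : ∀ e ∈ diagonals, IsDiagonal m e
  noncross : ∀ e₁ ∈ diagonals, ∀ e₂ ∈ diagonals, ¬ Cross m e₁ e₂
  maximal : ∀ e, IsDiagonal m e → (∀ e' ∈ diagonals, ¬ Cross m e e') → e ∈ diagonals

/-- `e` is a side in the triangulation `T`: either an edge of the polygon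
(between cyclically adjacent vertices) or a diagonal of `T`. -/
def IsSide (m : ℕ) (T : Triangulation m) (e : Finset (Fin m)) : Prop :=
  (∃ a b : Fin m, PolyAdj m a b ∧ e = {a, b}) ∨ e ∈ T.diagonals

/-- `t` is a triangle of the triangulation `T`: three distinct vertices each
pair of which forms a side of `T`. -/
def IsTriangle (m : ℕ) (T : Triangulation m) (t : Finset (Fin m)) : Prop :=
  ∃ a b c : Fin m, a ≠ b ∧ a ≠ c ∧ b ≠ c ∧ t = {a, b, c} ∧
    IsSide m T {a, b} ∧ IsSide m T {a, c} ∧ IsSide m T {b, c}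

/-- Two diagonals of `T` are neighbors if they both belong to `T` and lie on a
common triangle of `T`; they are independent otherwise. -/
def Neighbor (m : ℕ) (T : Triangulation m) (e₁ e₂ : Finset (Fin m)) : Prop :=
  e₁ ∈ T.diagonals ∧ e₂ ∈ T.diagonals ∧
    ∃ t, IsTriangle m T t ∧ e₁ ⊆ t ∧ e₂ ⊆ t

/-- `T'` is obtained from `T` by flipping the diagonal `e`, which removes `e`
and creates the new diagonal `e'` (necessarily the opposite diagonal of the
quadrilateral formed by the two triangles of `T` containing `e`, since `T'` is
again a triangulation). -/
def IsFlip (m : ℕ) (T T' : Triangulation m) (e e' : Finset (Fin m)) : Prop :=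
  e ∈ T.diagonals ∧ e' ∉ T.diagonals ∧
    T'.diagonals = insert e' (T.diagonals.erase e)

/-- `Ts 0, Ts 1, …, Ts r` is a sequence of triangulations in which `Ts (i+1)`
is obtained from `Ts i` by performing the flip `F i`, which removes the
diagonal `(F i).1` and creates the diagonal `(F i).2`. -/
def IsFlipSeq (m r : ℕ) (F : ℕ → Finset (Fin m) × Finset (Fin m))
    (Ts : ℕ → Triangulation m) : Prop :=
  ∀ i < r, IsFlip m (Ts i) (Ts (i + 1)) (F i).1 (F i).2

/-- The flip distance between two triangulations: the minimum length of a flip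
sequence transforming one into the other. -/
noncomputable def FlipDist (m : ℕ) (T T' : Triangulation m) : ℕ :=
  sInf {r | ∃ F Ts, IsFlipSeq m r F Ts ∧ Ts 0 = T ∧ Ts r = T'}

/-- `e` is a free-diagonal of `T` with respect to `Tfinal`: flipping `e` in `T`
creates a diagonal belonging to `Tfinal`. -/
def FreeDiagonal (m : ℕ) (T Tfinal : Triangulation m) (e : Finset (Fin m)) : Prop :=
  ∃ T' e', IsFlip m T T' e e' ∧ e' ∈ Tfinal.diagonals

/-- Arc of the DAG `D_F` associated to the flip sequence `F` with triangulation
sequence `Ts`: there is an arc from flip `i` to flip `j` when `i < j` and the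
diagonal created by flip `i` is a neighbor of the diagonal removed by flip `j`
in the triangulation `Ts j` in which flip `j` is performed. -/
def Arc (m r : ℕ) (F : ℕ → Finset (Fin m) × Finset (Fin m))
    (Ts : ℕ → Triangulation m) (i j : ℕ) : Prop :=
  i < j ∧ j < r ∧ Neighbor m (Ts j) (F i).2 (F j).1

/-- Flip `i` is a source node of the DAG `D_F`: a node with no incoming arcs. -/
def IsSource (m r : ℕ) (F : ℕ → Finset (Fin m) × Finset (Fin m))
    (Ts : ℕ → Triangulation m) (i : ℕ) : Prop :=
  i < r ∧ ∀ j, ¬ Arc m r F Ts j i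

section Helpers

variable {m : ℕ}

lemma cycDist_eq (hm0 : 0 < m) (a b : Fin m) :
    cycDist m a b = if a.val ≤ b.val then b.val - a.val else b.val + m - a.val := by
  unfold cycDist
  have ha := a.isLt; have hb := b.isLt
  rcases le_or_gt a.val b.val with h | h
  · rw [if_pos h]
    have h2 : b.val + m - a.val = (b.val - a.val) + m := by omega
    rw [h2, Nat.add_mod_right]
    exact Nat.mod_eq_of_lt (by omega)
  · rw [if_neg (by omega)]
    exact Nat.mod_eq_of_lt (by omega)

lemma succ_mod (a : Fin m) :
    (a.val + 1) % m = if a.val + 1 < m then a.val + 1 else 0 := by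
  have ha := a.isLt
  split_ifs with h
  · exact Nat.mod_eq_of_lt h
  · have h2 : a.val + 1 = m := by omega
    rw [h2, Nat.mod_self]

lemma polyAdj_iff (hm2 : 2 ≤ m) (a b : Fin m) :
    PolyAdj m a b ↔ cycDist m a b = 1 ∨ cycDist m b a = 1 := by
  have hm0 : 0 < m := by omega
  have ha := a.isLt; have hb := b.isLt
  unfold PolyAdj
  rw [succ_mod a, succ_mod b, cycDist_eq hm0, cycDist_eq hm0]
  split_ifs <;> omega

lemma polyAdj_symm {a b : Fin m} (h : PolyAdj m a b) : PolyAdj m b a := h.symm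

lemma pair_eq_cases {α : Type*} [DecidableEq α] {a b c d : α} (hab : a ≠ b)
    (h : ({a, b} : Finset α) = {c, d}) : (a = c ∧ b = d) ∨ (a = d ∧ b = c) := by
  have ha : a ∈ ({c, d} : Finset α) := by rw [← h]; simp
  have hb : b ∈ ({c, d} : Finset α) := by rw [← h]; simp
  simp only [Finset.mem_insert, Finset.mem_singleton] at ha hb
  rcases ha with rfl | rfl
  · rcases hb with h1 | rfl
    · exact absurd h1.symm hab
    · exact Or.inl ⟨rfl, rfl⟩
  · rcases hb with rfl | h1
    · exact Or.inr ⟨rfl, rfl⟩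
    · exact absurd h1.symm hab

lemma pair_of_mem_triple {α : Type*} [DecidableEq α] {a b c u v : α}
    (hu : u ∈ ({a, b, c} : Finset α)) (hv : v ∈ ({a, b, c} : Finset α)) (huv : u ≠ v) :
    ({u, v} : Finset α) = {a, b} ∨ ({u, v} : Finset α) = {a, c} ∨
      ({u, v} : Finset α) = {b, c} := by
  simp only [Finset.mem_insert, Finset.mem_singleton] at hu hv
  rcases hu with rfl | rfl | rfl <;> rcases hv with rfl | rfl | rfl <;>
    first
      | exact absurd rfl huv
      | exact Or.inl rfl
      | exact Or.inl (Finset.pair_comm _ _)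
      | exact Or.inr (Or.inl rfl)
      | exact Or.inr (Or.inl (Finset.pair_comm _ _))
      | exact Or.inr (Or.inr rfl)
      | exact Or.inr (Or.inr (Finset.pair_comm _ _))

lemma isDiagonal_not_adj {e : Finset (Fin m)} {p q : Fin m} (hd : IsDiagonal m e)
    (hpq : p ≠ q) (he : e = {p, q}) : ¬ PolyAdj m p q := by
  obtain ⟨a, b, hab, hnadj, rfl⟩ := hd
  rcases pair_eq_cases hab he with ⟨rfl, rfl⟩ | ⟨rfl, rfl⟩
  · exact hnadj
  · exact fun h => hnadj (polyAdj_symm h)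

lemma isSide_cases {T : Triangulation m} {p q : Fin m} (hpq : p ≠ q)
    (h : IsSide m T {p, q}) : PolyAdj m p q ∨ {p, q} ∈ T.diagonals := by
  rcases h with ⟨a, b, hadj, he⟩ | h
  · left
    rcases pair_eq_cases hpq he with ⟨rfl, rfl⟩ | ⟨rfl, rfl⟩
    · exact hadj
    · exact polyAdj_symm hadj
  · exact Or.inr h

lemma cycDist_inj (hm0 : 0 < m) {a x y : Fin m} (h : cycDist m a x = cycDist m a y) :
    x = y := by
  have h1 := a.isLt; have h2 := x.isLt; have h3 := y.isLt
  rw [cycDist_eq hm0, cycDist_eq hm0] at h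
  apply Fin.ext
  split_ifs at h <;> omega

lemma cycDist_self (hm0 : 0 < m) (a : Fin m) : cycDist m a a = 0 := by
  rw [cycDist_eq hm0]; simp

lemma cycBtw_ne (hm0 : 0 < m) {a x b : Fin m} (h : CycBtw m a x b) :
    x ≠ a ∧ x ≠ b ∧ a ≠ b := by
  obtain ⟨h1, h2⟩ := h
  refine ⟨?_, ?_, ?_⟩
  · rintro rfl; rw [cycDist_self hm0] at h1; exact absurd h1 (lt_irrefl _)
  · rintro rfl; exact absurd h2 (lt_irrefl _)
  · rintro rfl; rw [cycDist_self hm0] at h2; omega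

lemma cycBtw_total (hm0 : 0 < m) {p q w : Fin m} (hwp : w ≠ p) (hwq : w ≠ q)
    (hpq : p ≠ q) : CycBtw m p w q ∨ CycBtw m q w p := by
  have h1 : w.val ≠ p.val := fun h => hwp (Fin.ext h)
  have h2 : w.val ≠ q.val := fun h => hwq (Fin.ext h)
  have h3 : p.val ≠ q.val := fun h => hpq (Fin.ext h)
  have := p.isLt; have := q.isLt; have := w.isLt
  unfold CycBtw
  simp only [cycDist_eq hm0]
  split_ifs <;> omega

/-- Every diagonal of a triangulation admits an "apex" on the `a → b` side,
forming a triangle with it. -/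
lemma exists_triangle_side (hm : 3 ≤ m) (T : Triangulation m) {a b : Fin m}
    (hab : a ≠ b) (hadj : ¬ PolyAdj m a b) (hmem : {a, b} ∈ T.diagonals) :
    ∃ x : Fin m, CycBtw m a x b ∧ IsSide m T {a, x} ∧ IsSide m T {x, b} := by
  classical
  have hm0 : 0 < m := by omega
  have hva := a.isLt; have hvb := b.isLt
  have habv : a.val ≠ b.val := fun h => hab (Fin.ext h)
  have hq0 : 0 < cycDist m a b := by
    rw [cycDist_eq hm0]; split_ifs <;> omega
  have hqlt : cycDist m a b < m := Nat.mod_lt _ hm0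
  have hq1 : cycDist m a b ≠ 1 ∧ cycDist m b a ≠ 1 := by
    constructor <;> intro h <;> exact hadj ((polyAdj_iff (by omega : 2 ≤ m) a b).mpr (by tauto))
  -- the successor of a
  obtain ⟨x', hx'v⟩ : ∃ x' : Fin m, x'.val = (a.val + 1) % m :=
    ⟨⟨_, Nat.mod_lt _ hm0⟩, rfl⟩
  have hx'd : cycDist m a x' = 1 := by
    rw [cycDist_eq hm0, hx'v, succ_mod a]; split_ifs <;> omega
  have hq2 : 1 < cycDist m a b := by
    rcases Nat.lt_or_ge 1 (cycDist m a b) with h | h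
    · exact h
    · omega
  set S : Finset (Fin m) := Finset.filter
    (fun x => 0 < cycDist m a x ∧ cycDist m a x < cycDist m a b ∧ IsSide m T {a, x})
    Finset.univ with hS
  have hx'S : x' ∈ S := by
    rw [hS, Finset.mem_filter]
    exact ⟨Finset.mem_univ _, by omega, by omega,
      Or.inl ⟨a, x', Or.inl hx'v.symm, rfl⟩⟩
  obtain ⟨x, hxS, hxmax⟩ := Finset.exists_max_image S (fun x => cycDist m a x) ⟨x', hx'S⟩
  rw [hS, Finset.mem_filter] at hxS
  obtain ⟨-, h0x, hxq, hside_ax⟩ := hxS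
  by_cases hSide : IsSide m T {x, b}
  · exact ⟨x, ⟨h0x, hxq⟩, hside_ax, hSide⟩
  exfalso
  have hvx := x.isLt
  have hxb : x ≠ b := by rintro rfl; exact absurd hxq (lt_irrefl _)
  have hnadjxb : ¬ PolyAdj m x b := fun h => hSide (Or.inl ⟨x, b, h, rfl⟩)
  have hnotmem : ({x, b} : Finset (Fin m)) ∉ T.diagonals := fun h => hSide (Or.inr h)
  have hex : ∃ e' ∈ T.diagonals, Cross m {x, b} e' := by
    by_contra hc; push_neg at hc
    exact hnotmem (T.maximal _ ⟨x, b, hxb, hnadjxb, rfl⟩ hc)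
  obtain ⟨d', hd'T, hcross⟩ := hex
  obtain ⟨a', b', c', d'', h1, h2, h3, h4⟩ := hcross
  have hmain : ∃ u v : Fin m, d' = {u, v} ∧ CycBtw m x u b ∧ CycBtw m b v x := by
    rcases pair_eq_cases hxb h1 with ⟨rfl, rfl⟩ | ⟨rfl, rfl⟩
    · exact ⟨c', d'', h2, h3, h4⟩
    · exact ⟨d'', c', by rw [h2, Finset.pair_comm], h4, h3⟩
  obtain ⟨u, v, hd'uv, hu, hv⟩ := hmain
  have hvu := u.isLt; have hvv := v.isLt
  have hpu : cycDist m a x < cycDist m a u ∧ cycDist m a u < cycDist m a b := by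
    have e1 := hu.1; have e2 := hu.2
    have e3 := h0x; have e4 := hxq
    simp only [cycDist_eq hm0] at e1 e2 e3 e4 ⊢
    split_ifs at e1 e2 e3 e4 ⊢ <;> omega
  have hvcases : v.val = a.val ∨ (0 < cycDist m a v ∧ cycDist m a v < cycDist m a x) ∨
      (0 < cycDist m b v ∧ cycDist m b v < cycDist m b a) := by
    have e1 := hv.1; have e2 := hv.2
    have e3 := h0x; have e4 := hxq
    simp only [cycDist_eq hm0] at e1 e2 e3 e4 ⊢
    split_ifs at e1 e2 e3 e4 ⊢ <;> omega
  rcases hvcases with hva' | hbtw | hbtw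
  · -- v = a : contradicts maximality of x
    have hva2 : v = a := Fin.ext hva'
    subst hva2
    have huS : u ∈ S := by
      rw [hS, Finset.mem_filter]
      refine ⟨Finset.mem_univ _, by omega, hpu.2, Or.inr ?_⟩
      rw [Finset.pair_comm, ← hd'uv]; exact hd'T
    have := hxmax u huS
    omega
  · -- v strictly between a and x : d' crosses the side {a, x}
    have hCxu : CycBtw m x u a := by
      constructor
      · exact hu.1
      · have e1 := hu.1; have e2 := hpu.1; have e3 := hpu.2; have e4 := h0x
        simp only [cycDist_eq hm0] at e1 e2 e3 e4 ⊢
        split_ifs at e1 e2 e3 e4 ⊢ <;> omega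
    have hcr : Cross m {a, x} d' :=
      ⟨a, x, v, u, rfl, by rw [hd'uv, Finset.pair_comm], hbtw, hCxu⟩
    have hax : a ≠ x := by
      rintro rfl
      rw [cycDist_self hm0] at h0x
      exact absurd h0x (lt_irrefl _)
    rcases isSide_cases hax hside_ax with hadj2 | hmem2
    · have hd := (polyAdj_iff (by omega : 2 ≤ m) a x).mp hadj2
      have e1 := hbtw.1; have e2 := hbtw.2
      have e3 := h0x; have e4 := hxq
      simp only [cycDist_eq hm0] at e1 e2 e3 e4 hd
      split_ifs at e1 e2 e3 e4 hd <;> omega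
    · exact T.noncross _ hmem2 _ hd'T hcr
  · -- v strictly between b and a : d' crosses the diagonal {a, b}
    have hCaub : CycBtw m a u b := ⟨by omega, hpu.2⟩
    exact T.noncross _ hmem _ hd'T ⟨a, b, u, v, rfl, hd'uv, hCaub, hbtw⟩

/-- Every diagonal of a triangulation lies on a triangle. -/
lemma diag_triangle (hm : 3 ≤ m) (T : Triangulation m) {e : Finset (Fin m)}
    (he : e ∈ T.diagonals) : ∃ t, IsTriangle m T t ∧ e ⊆ t := by
  have hm0 : 0 < m := by omega
  obtain ⟨a, b, hab, hnadj, rfl⟩ := T.isDiagonal e he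
  obtain ⟨x, hx, s1, s2⟩ := exists_triangle_side hm T hab hnadj he
  obtain ⟨hxa, hxb, -⟩ := cycBtw_ne hm0 hx
  refine ⟨{a, x, b}, ⟨a, x, b, Ne.symm hxa, hab, hxb, rfl, s1, Or.inr he, s2⟩, ?_⟩
  intro z hz
  simp only [Finset.mem_insert, Finset.mem_singleton] at hz ⊢
  tauto

/-- Uniqueness of the apex on a given side (auxiliary asymmetric version). -/
lemma apex_eq_aux (hm : 3 ≤ m) (T : Triangulation m) {p q x w : Fin m}
    (hx : CycBtw m p x q) (hw : CycBtw m p w q)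
    (s2 : IsSide m T {x, q}) (s3 : IsSide m T {p, w})
    (hlt : cycDist m p x < cycDist m p w) : False := by
  have hm0 : 0 < m := by omega
  have hvp := p.isLt; have hvq := q.isLt; have hvx := x.isLt; have hvw := w.isLt
  have e1 := hx.1; have e2 := hx.2; have e3 := hw.1; have e4 := hw.2
  have hxq : x ≠ q := (cycBtw_ne hm0 hx).2.1
  have hpw : p ≠ w := Ne.symm (cycBtw_ne hm0 hw).1
  have hcross : Cross m {x, q} {p, w} := by
    refine ⟨x, q, w, p, rfl, Finset.pair_comm p w, ⟨?_, ?_⟩, ⟨?_, ?_⟩⟩ <;>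
      · simp only [cycDist_eq hm0] at e1 e2 e3 e4 hlt ⊢
        split_ifs at e1 e2 e3 e4 hlt ⊢ <;> omega
  rcases isSide_cases hxq s2 with hadj | hmem2
  · have hd := (polyAdj_iff (by omega : 2 ≤ m) x q).mp hadj
    simp only [cycDist_eq hm0] at e1 e2 e3 e4 hlt hd
    split_ifs at e1 e2 e3 e4 hlt hd <;> omega
  rcases isSide_cases hpw s3 with hadj | hmem3
  · have hd := (polyAdj_iff (by omega : 2 ≤ m) p w).mp hadj
    simp only [cycDist_eq hm0] at e1 e2 e3 e4 hlt hd
    split_ifs at e1 e2 e3 e4 hlt hd <;> omega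
  exact T.noncross _ hmem2 _ hmem3 hcross

/-- Uniqueness of the apex on a given side. -/
lemma apex_eq (hm : 3 ≤ m) (T : Triangulation m) {p q x w : Fin m}
    (hx : CycBtw m p x q) (hw : CycBtw m p w q)
    (s1 : IsSide m T {p, x}) (s2 : IsSide m T {x, q})
    (s3 : IsSide m T {p, w}) (s4 : IsSide m T {w, q}) : x = w := by
  have hm0 : 0 < m := by omega
  rcases lt_trichotomy (cycDist m p x) (cycDist m p w) with h | h | h
  · exact (apex_eq_aux hm T hx hw s2 s3 h).elim
  · exact cycDist_inj hm0 h
  · exact (apex_eq_aux hm T hw hx s4 s1 h).elim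

section Seq

variable {r : ℕ} {F : ℕ → Finset (Fin m) × Finset (Fin m)} {Ts : ℕ → Triangulation m}

lemma flip_removed (hseq : IsFlipSeq m r F Ts) {i : ℕ} (hi : i < r) :
    (F i).1 ∉ (Ts (i + 1)).diagonals := by
  obtain ⟨h1, h2, h3⟩ := hseq i hi
  rw [h3]
  simp only [Finset.mem_insert, Finset.mem_erase]
  rintro (h | ⟨hne, -⟩)
  · exact h2 (h ▸ h1)
  · exact hne rfl

lemma created_between (hseq : IsFlipSeq m r F Ts) {e : Finset (Fin m)} :
    ∀ t, t ≤ r → ∀ s, s ≤ t → e ∉ (Ts s).diagonals → e ∈ (Ts t).diagonals →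
      ∃ k, s ≤ k ∧ k < t ∧ (F k).2 = e := by
  intro t
  induction t with
  | zero =>
    intro _ s hs h1 h2
    have : s = 0 := by omega
    subst this
    exact absurd h2 h1
  | succ t ih =>
    intro ht s hs h1 h2
    rcases Nat.eq_or_lt_of_le hs with rfl | hlt
    · exact absurd h2 h1
    · have hst : s ≤ t := by omega
      by_cases hmem : e ∈ (Ts t).diagonals
      · obtain ⟨k, hk⟩ := ih (by omega) s hst h1 hmem
        exact ⟨k, hk.1, by omega, hk.2.2⟩
      · refine ⟨t, hst, by omega, ?_⟩
        obtain ⟨-, -, h3⟩ := hseq t (by omega)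
        rw [h3] at h2
        simp only [Finset.mem_insert, Finset.mem_erase] at h2
        rcases h2 with h | ⟨-, h⟩
        · exact h.symm
        · exact absurd h hmem

lemma source_mem_init (hm : 3 ≤ m) (hseq : IsFlipSeq m r F Ts) {i : ℕ}
    (hsi : IsSource m r F Ts i) : (F i).1 ∈ (Ts 0).diagonals := by
  obtain ⟨hi, hns⟩ := hsi
  by_contra h0
  have hmem : (F i).1 ∈ (Ts i).diagonals := (hseq i hi).1
  obtain ⟨k, -, hki, hk2⟩ := created_between hseq i (le_of_lt hi) 0 (Nat.zero_le _) h0 hmem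
  obtain ⟨t', ht', hsub⟩ := diag_triangle hm (Ts i) hmem
  exact hns k ⟨hki, hi, by rw [hk2]; exact ⟨hmem, hmem, t', ht', hsub, hsub⟩⟩

lemma side_transfer (hseq : IsFlipSeq m r F Ts) {j : ℕ} (hsj : IsSource m r F Ts j)
    {t' s : Finset (Fin m)} (htri : IsTriangle m (Ts j) t') (hjt : (F j).1 ⊆ t')
    (hs : IsSide m (Ts j) s) (hst : s ⊆ t') : IsSide m (Ts 0) s := by
  rcases hs with h | h
  · exact Or.inl h
  · by_cases h0 : s ∈ (Ts 0).diagonals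
    · exact Or.inr h0
    · obtain ⟨k, -, hkj, hk2⟩ :=
        created_between hseq j (le_of_lt hsj.1) 0 (Nat.zero_le _) h0 h
      exact (hsj.2 k ⟨hkj, hsj.1,
        by rw [hk2]; exact ⟨h, (hseq j hsj.1).1, t', htri, hst, hjt⟩⟩).elim

lemma core (hm : 3 ≤ m) (hseq : IsFlipSeq m r F Ts)
    {i j : ℕ} (hsi : IsSource m r F Ts i) (hsj : IsSource m r F Ts j) (hij : i < j)
    {t : Finset (Fin m)} (htri : IsTriangle m (Ts 0) t)
    (hit : (F i).1 ⊆ t) (hjt : (F j).1 ⊆ t) : False := by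
  have hm0 : 0 < m := by omega
  have hi : i < r := hsi.1
  have hj : j < r := hsj.1
  have hmemi : (F i).1 ∈ (Ts i).diagonals := (hseq i hi).1
  have hmemj : (F j).1 ∈ (Ts j).diagonals := (hseq j hj).1
  have hei0 : (F i).1 ∈ (Ts 0).diagonals := source_mem_init hm hseq hsi
  have hej0 : (F j).1 ∈ (Ts 0).diagonals := source_mem_init hm hseq hsj
  by_cases heq : (F i).1 = (F j).1
  · -- the same diagonal is removed twice: it was recreated in between
    have hrm : (F i).1 ∉ (Ts (i + 1)).diagonals := flip_removed hseq hi
    have hmemj' : (F i).1 ∈ (Ts j).diagonals := heq ▸ hmemj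
    obtain ⟨k, hk1, hk2, hk3⟩ :=
      created_between hseq j (le_of_lt hj) (i + 1) (by omega) hrm hmemj'
    obtain ⟨t', ht', hsub⟩ := diag_triangle hm (Ts j) hmemj'
    exact hsj.2 k ⟨by omega, hj,
      by rw [hk3]; exact ⟨hmemj', hmemj, t', ht', hsub, heq ▸ hsub⟩⟩
  · obtain ⟨a, b, c, hab, hac, hbc, rfl, sab, sac, sbc⟩ := htri
    obtain ⟨a1, b1, hne1, hnadj1, he1⟩ := (Ts 0).isDiagonal _ hei0
    obtain ⟨a2, b2, hne2, hnadj2, he2⟩ := (Ts 0).isDiagonal _ hej0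
    -- the two diagonals share a vertex p
    have hint : ((F i).1 ∩ (F j).1).Nonempty := by
      rw [Finset.nonempty_iff_ne_empty]
      intro hemp
      have hdisj : Disjoint (F i).1 (F j).1 := Finset.disjoint_iff_inter_eq_empty.mpr hemp
      have hcard : ((F i).1 ∪ (F j).1).card = 4 := by
        rw [Finset.card_union_of_disjoint hdisj, he1, he2,
          Finset.card_pair hne1, Finset.card_pair hne2]
      have hsub : (F i).1 ∪ (F j).1 ⊆ {a, b, c} := Finset.union_subset hit hjt
      have hle := Finset.card_le_card hsub
      rw [hcard, Finset.card_eq_three.mpr ⟨a, b, c, hab, hac, hbc, rfl⟩] at hle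
      omega
    obtain ⟨p, hp⟩ := hint
    rw [Finset.mem_inter] at hp
    obtain ⟨hpi, hpj⟩ := hp
    have hwex : ∃ w, w ≠ p ∧ (F i).1 = {p, w} := by
      rw [he1] at hpi
      simp only [Finset.mem_insert, Finset.mem_singleton] at hpi
      rcases hpi with rfl | rfl
      · exact ⟨b1, Ne.symm hne1, he1⟩
      · exact ⟨a1, hne1, by rw [he1, Finset.pair_comm]⟩
    have hqex : ∃ q, q ≠ p ∧ (F j).1 = {p, q} := by
      rw [he2] at hpj
      simp only [Finset.mem_insert, Finset.mem_singleton] at hpj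
      rcases hpj with rfl | rfl
      · exact ⟨b2, Ne.symm hne2, he2⟩
      · exact ⟨a2, hne2, by rw [he2, Finset.pair_comm]⟩
    obtain ⟨w, hwp, heiw⟩ := hwex
    obtain ⟨q, hqp, hejq⟩ := hqex
    have hpq : p ≠ q := Ne.symm hqp
    have hwq : w ≠ q := by
      rintro rfl
      exact heq (heiw.trans hejq.symm)
    -- sides of the initial triangulation
    have hwt : w ∈ ({a, b, c} : Finset (Fin m)) := hit (by rw [heiw]; simp)
    have hqt : q ∈ ({a, b, c} : Finset (Fin m)) := hjt (by rw [hejq]; simp)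
    have hside_wq : IsSide m (Ts 0) {w, q} := by
      rcases pair_of_mem_triple hwt hqt hwq with h | h | h
      · rw [h]; exact sab
      · rw [h]; exact sac
      · rw [h]; exact sbc
    have hside_pw : IsSide m (Ts 0) {p, w} := Or.inr (heiw ▸ hei0)
    -- apexes of (F j).1 in Ts j on both sides
    have hnadjpq : ¬ PolyAdj m p q :=
      isDiagonal_not_adj ((Ts j).isDiagonal _ hmemj) hpq hejq
    have hmemj_pq : ({p, q} : Finset (Fin m)) ∈ (Ts j).diagonals := hejq ▸ hmemj
    have hmemj_qp : ({q, p} : Finset (Fin m)) ∈ (Ts j).diagonals := by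
      rw [Finset.pair_comm]; exact hmemj_pq
    obtain ⟨x, hx, sxp, sxq⟩ := exists_triangle_side hm (Ts j) hpq hnadjpq hmemj_pq
    obtain ⟨y, hy, syq, syp⟩ := exists_triangle_side hm (Ts j) hpq.symm
      (fun h => hnadjpq (polyAdj_symm h)) hmemj_qp
    obtain ⟨hxp, hxq, -⟩ := cycBtw_ne hm0 hx
    obtain ⟨hyq, hyp, -⟩ := cycBtw_ne hm0 hy
    have htx : IsTriangle m (Ts j) {p, x, q} :=
      ⟨p, x, q, Ne.symm hxp, hpq, hxq, rfl, sxp, Or.inr hmemj_pq, sxq⟩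
    have hty : IsTriangle m (Ts j) {q, y, p} :=
      ⟨q, y, p, Ne.symm hyq, hpq.symm, hyp, rfl, syq, Or.inr hmemj_qp, syp⟩
    have hsub_jx : (F j).1 ⊆ ({p, x, q} : Finset (Fin m)) := by
      rw [hejq]; intro z hz
      simp only [Finset.mem_insert, Finset.mem_singleton] at hz ⊢; tauto
    have hsub_jy : (F j).1 ⊆ ({q, y, p} : Finset (Fin m)) := by
      rw [hejq]; intro z hz
      simp only [Finset.mem_insert, Finset.mem_singleton] at hz ⊢; tauto
    have s0xp : IsSide m (Ts 0) {p, x} := side_transfer hseq hsj htx hsub_jx sxp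
      (by intro z hz; simp only [Finset.mem_insert, Finset.mem_singleton] at hz ⊢; tauto)
    have s0xq : IsSide m (Ts 0) {x, q} := side_transfer hseq hsj htx hsub_jx sxq
      (by intro z hz; simp only [Finset.mem_insert, Finset.mem_singleton] at hz ⊢; tauto)
    have s0yq : IsSide m (Ts 0) {q, y} := side_transfer hseq hsj hty hsub_jy syq
      (by intro z hz; simp only [Finset.mem_insert, Finset.mem_singleton] at hz ⊢; tauto)
    have s0yp : IsSide m (Ts 0) {y, p} := side_transfer hseq hsj hty hsub_jy syp
      (by intro z hz; simp only [Finset.mem_insert, Finset.mem_singleton] at hz ⊢; tauto)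
    -- (F i).1 is a side of Ts j, lying on a common triangle with (F j).1
    have hmain : IsSide m (Ts j) (F i).1 ∧
        ∃ t', IsTriangle m (Ts j) t' ∧ (F i).1 ⊆ t' ∧ (F j).1 ⊆ t' := by
      rcases cycBtw_total hm0 hwp hwq hpq with hbtw | hbtw
      · have hxw : x = w := apex_eq hm (Ts 0) hx hbtw s0xp s0xq hside_pw hside_wq
        subst hxw
        refine ⟨by rw [heiw]; exact sxp, {p, x, q}, htx, ?_, hsub_jx⟩
        rw [heiw]; intro z hz
        simp only [Finset.mem_insert, Finset.mem_singleton] at hz ⊢; tauto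
      · have hyw : y = w := apex_eq hm (Ts 0) hy hbtw s0yq s0yp
          (by rw [Finset.pair_comm]; exact hside_wq)
          (by rw [Finset.pair_comm]; exact hside_pw)
        subst hyw
        refine ⟨by rw [heiw, Finset.pair_comm]; exact syp, {q, y, p}, hty, ?_, hsub_jy⟩
        rw [heiw]; intro z hz
        simp only [Finset.mem_insert, Finset.mem_singleton] at hz ⊢; tauto
    obtain ⟨hside_ei, t', htri', hsub_i, hsub_j⟩ := hmain
    have hnadj_pw : ¬ PolyAdj m p w :=
      isDiagonal_not_adj ((Ts i).isDiagonal _ hmemi) (Ne.symm hwp) heiw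
    have hmem_ei_j : (F i).1 ∈ (Ts j).diagonals := by
      rcases hside_ei with ⟨a', b', hadj', he'⟩ | h
      · exfalso
        rw [heiw] at he'
        rcases pair_eq_cases (Ne.symm hwp) he' with ⟨rfl, rfl⟩ | ⟨rfl, rfl⟩
        · exact hnadj_pw hadj'
        · exact hnadj_pw (polyAdj_symm hadj')
      · exact h
    have hrm : (F i).1 ∉ (Ts (i + 1)).diagonals := flip_removed hseq hi
    obtain ⟨k, hk1, hk2, hk3⟩ :=
      created_between hseq j (le_of_lt hj) (i + 1) (by omega) hrm hmem_ei_j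
    exact hsj.2 k ⟨by omega, hj,
      by rw [hk3]; exact ⟨hmem_ei_j, hmemj, t', htri', hsub_i, hsub_j⟩⟩

end Seq

end Helpers

/-- Let `F` be a flip sequence realizing a shortest path from `Tinit` to
`Tfinal`, and let `i, j` be two distinct source nodes (nodes with no incoming
arcs) of the DAG `D_F`. Then the underlying diagonals `(F i).1` and `(F j).1`
are diagonals of `Tinit`, and they are independent in `Tinit` (they do not lie
on a common triangle of `Tinit`); i.e. the underlying diagonals of the source
nodes are pairwise independent diagonals of `Tinit`. -/
theorem source_diagonals_independent (m : ℕ) (hm : 3 ≤ m)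
    (Tinit Tfinal : Triangulation m)
    (r : ℕ) (F : ℕ → Finset (Fin m) × Finset (Fin m)) (Ts : ℕ → Triangulation m)
    (hseq : IsFlipSeq m r F Ts) (h0 : Ts 0 = Tinit) (hr : Ts r = Tfinal)
    (hmin : r = FlipDist m Tinit Tfinal)
    (i j : ℕ) (hsi : IsSource m r F Ts i) (hsj : IsSource m r F Ts j)
    (hij : i ≠ j) :
    (F i).1 ∈ Tinit.diagonals ∧ (F j).1 ∈ Tinit.diagonals ∧
      ¬ Neighbor m Tinit (F i).1 (F j).1 := by
  subst h0
  refine ⟨source_mem_init hm hseq hsi, source_mem_init hm hseq hsj, ?_⟩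
  intro hnb
  obtain ⟨h1, h2, t, htri, hsub1, hsub2⟩ := hnb
  rcases Nat.lt_or_ge i j with h | h
  · exact core hm hseq hsi hsj h htri hsub1 hsub2
  · exact core hm hseq hsj hsi (by omega) htri hsub2 hsub1
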